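/- Suppose 1 ≤ q ≤ p ≤ ∞, φ is a measure on X, G is a countable collection of φ-measurable functions from X to [0,∞], 1 ≤ γ < ∞, the cardinality of {g ∈ G : g(z) ≠ 0} is at most γ for φ-almost all z, and f(z) = Σ_{g ∈ G} g(z) for φ-almost all z. Then: if q < ∞, the L^p(φ) norm of f is at most γ (Σ_{g ∈ G} (L^p-norm of g)^q)^{1/q}; and if q = ∞, the L^p(φ) norm of f is at most γ sup({0} ∪ {L^p-norm of g : g ∈ G}). -/

import Mathlib

open MeasureTheory Set
open scoped ENNReal

/-- The `L^p` "norm" `φ_{(p)}(h)` of a `[0,∞]`-valued function: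
`(∫ h^p dφ)^{1/p}` for `p < ∞` and the essential supremum for `p = ∞`. -/
noncomputable def lpNormE {X : Type*} [MeasurableSpace X] (φ : Measure X) (p : ℝ≥0∞)
    (h : X → ℝ≥0∞) : ℝ≥0∞ :=
  if p = ∞ then essSup h φ else (∫⁻ x, h x ^ p.toReal ∂φ) ^ (1 / p.toReal)

lemma iSup_rpow_aux {ι : Sort*} (f : ι → ℝ≥0∞) {r : ℝ} (hr : 0 < r) :
    (⨆ i, f i) ^ r = ⨆ i, f i ^ r := by
  refine le_antisymm ?_ (iSup_le fun i => ENNReal.rpow_le_rpow (le_iSup f i) hr.le)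
  have h1 : (⨆ i, f i) ≤ (⨆ i, f i ^ r) ^ (1 / r) := by
    refine iSup_le fun i => ?_
    have : f i = (f i ^ r) ^ (1 / r) := by
      rw [← ENNReal.rpow_mul, mul_one_div_cancel hr.ne', ENNReal.rpow_one]
    rw [this]
    exact ENNReal.rpow_le_rpow (le_iSup (fun i => f i ^ r) i) (by positivity)
  calc (⨆ i, f i) ^ r ≤ ((⨆ i, f i ^ r) ^ (1 / r)) ^ r := ENNReal.rpow_le_rpow h1 hr.le
    _ = ⨆ i, f i ^ r := by
      rw [← ENNReal.rpow_mul, one_div_mul_cancel hr.ne', ENNReal.rpow_one]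

lemma finset_holder_aux {ι : Type*} (s : Finset ι) (a : ι → ℝ≥0∞) {r : ℝ} (hr : 1 ≤ r) :
    ∑ i ∈ s, a i ≤ (s.card : ℝ≥0∞) ^ (1 - 1 / r) * (∑ i ∈ s, a i ^ r) ^ (1 / r) := by
  have hr0 : 0 < r := lt_of_lt_of_le one_pos hr
  rcases s.eq_empty_or_nonempty with rfl | hs
  · simp
  have hn0 : (s.card : ℝ≥0∞) ≠ 0 := by
    simp [Finset.card_eq_zero, hs.ne_empty]
  have hntop : (s.card : ℝ≥0∞) ≠ ⊤ := ENNReal.natCast_ne_top _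
  set n : ℝ≥0∞ := (s.card : ℝ≥0∞) with hn
  have hw : ∑ _i ∈ s, n⁻¹ = 1 := by
    rw [Finset.sum_const, nsmul_eq_mul, ENNReal.mul_inv_cancel hn0 hntop]
  have key := ENNReal.rpow_arith_mean_le_arith_mean_rpow s (fun _ => n⁻¹) a hw hr
  have e1 : (∑ i ∈ s, n⁻¹ * a i) = n⁻¹ * ∑ i ∈ s, a i := by rw [Finset.mul_sum]
  have e2 : (∑ i ∈ s, n⁻¹ * a i ^ r) = n⁻¹ * ∑ i ∈ s, a i ^ r := by rw [Finset.mul_sum]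
  have hmul : n * n⁻¹ = 1 := ENNReal.mul_inv_cancel hn0 hntop
  have h1 : (∑ i ∈ s, a i) ^ r ≤ n ^ (r - 1) * ∑ i ∈ s, a i ^ r := by
    calc (∑ i ∈ s, a i) ^ r = (n * (n⁻¹ * ∑ i ∈ s, a i)) ^ r := by
          rw [← mul_assoc, hmul, one_mul]
      _ = n ^ r * (n⁻¹ * ∑ i ∈ s, a i) ^ r := ENNReal.mul_rpow_of_nonneg _ _ hr0.le
      _ = n ^ r * (∑ i ∈ s, n⁻¹ * a i) ^ r := by rw [e1]
      _ ≤ n ^ r * ∑ i ∈ s, n⁻¹ * a i ^ r := mul_le_mul_right key _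
      _ = n ^ r * (n ^ (-1 : ℝ) * ∑ i ∈ s, a i ^ r) := by rw [e2, ENNReal.rpow_neg_one]
      _ = (n ^ r * n ^ (-1 : ℝ)) * ∑ i ∈ s, a i ^ r := by rw [mul_assoc]
      _ = n ^ (r - 1) * ∑ i ∈ s, a i ^ r := by
          rw [← ENNReal.rpow_add _ _ hn0 hntop, sub_eq_add_neg]
  calc ∑ i ∈ s, a i = ((∑ i ∈ s, a i) ^ r) ^ (1 / r) := by
        rw [← ENNReal.rpow_mul, mul_one_div_cancel hr0.ne', ENNReal.rpow_one]
    _ ≤ (n ^ (r - 1) * ∑ i ∈ s, a i ^ r) ^ (1 / r) := ENNReal.rpow_le_rpow h1 (by positivity)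
    _ = n ^ (1 - 1 / r) * (∑ i ∈ s, a i ^ r) ^ (1 / r) := by
        rw [ENNReal.mul_rpow_of_nonneg _ _ (by positivity), ← ENNReal.rpow_mul]
        congr 1
        field_simp

lemma finset_minkowski_aux {X : Type*} [MeasurableSpace X] (φ : Measure X) {ι : Type*}
    (s : Finset ι) (h : ι → X → ℝ≥0∞) (hm : ∀ i, Measurable (h i)) {r : ℝ} (hr : 1 ≤ r) :
    (∫⁻ z, (∑ i ∈ s, h i z) ^ r ∂φ) ^ (1 / r) ≤ ∑ i ∈ s, (∫⁻ z, h i z ^ r ∂φ) ^ (1 / r) := by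
  have hr0 : 0 < r := lt_of_lt_of_le one_pos hr
  classical
  induction s using Finset.induction_on with
  | empty => simp [ENNReal.zero_rpow_of_pos, hr0, one_div_pos.mpr hr0]
  | insert _ _ hi ih =>
    rename_i a t
    simp only [Finset.sum_insert hi]
    calc (∫⁻ z, (h a z + ∑ i ∈ t, h i z) ^ r ∂φ) ^ (1 / r)
        ≤ (∫⁻ z, h a z ^ r ∂φ) ^ (1 / r) + (∫⁻ z, (∑ i ∈ t, h i z) ^ r ∂φ) ^ (1 / r) :=
          ENNReal.lintegral_Lp_add_le (hm a).aemeasurable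
            (Finset.measurable_sum t fun i _ => hm i).aemeasurable hr
      _ ≤ (∫⁻ z, h a z ^ r ∂φ) ^ (1 / r) + ∑ i ∈ t, (∫⁻ z, h i z ^ r ∂φ) ^ (1 / r) :=
          add_le_add_right ih _

lemma tsum_minkowski_aux {X : Type*} [MeasurableSpace X] (φ : Measure X) {ι : Type*} [Countable ι]
    (h : ι → X → ℝ≥0∞) (hm : ∀ i, Measurable (h i)) {r : ℝ} (hr : 1 ≤ r) :
    (∫⁻ z, (∑' i, h i z) ^ r ∂φ) ^ (1 / r) ≤ ∑' i, (∫⁻ z, h i z ^ r ∂φ) ^ (1 / r) := by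
  have hr0 : 0 < r := lt_of_lt_of_le one_pos hr
  classical
  have hpt : ∀ z, (∑' i, h i z) ^ r = ⨆ s : Finset ι, (∑ i ∈ s, h i z) ^ r := by
    intro z
    rw [ENNReal.tsum_eq_iSup_sum, iSup_rpow_aux _ hr0]
  have hmono : Monotone fun s : Finset ι => fun z => (∑ i ∈ s, h i z) ^ r := by
    intro s t hst
    exact fun z => ENNReal.rpow_le_rpow
      (Finset.sum_le_sum_of_subset hst) hr0.le
  have hdir : Directed (· ≤ ·) fun s : Finset ι => fun z => (∑ i ∈ s, h i z) ^ r :=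
    hmono.directed_le
  have hint : ∫⁻ z, (∑' i, h i z) ^ r ∂φ = ⨆ s : Finset ι, ∫⁻ z, (∑ i ∈ s, h i z) ^ r ∂φ := by
    simp_rw [hpt]
    exact lintegral_iSup_directed
      (fun s => ((Finset.measurable_sum s fun i _ => hm i).pow_const r).aemeasurable) hdir
  rw [hint, iSup_rpow_aux _ (by positivity : (0:ℝ) < 1/r)]
  refine iSup_le fun s => ?_
  exact (finset_minkowski_aux φ s h hm hr).trans (ENNReal.sum_le_tsum s)

lemma support_finset_aux {X : Type*} (G : Set (X → ℝ≥0∞)) (z : X) {c : ℝ≥0∞}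
    (hctop : c ≠ ⊤) (hz : (({g ∈ G | g z ≠ 0}).encard : ℝ≥0∞) ≤ c) :
    ∃ s : Finset ↥G, (∀ g : ↥G, g ∉ s → (g : X → ℝ≥0∞) z = 0) ∧ ((s.card : ℝ≥0∞)) ≤ c := by
  have hne : ({g ∈ G | g z ≠ 0}).encard ≠ ⊤ := by
    intro htop
    rw [htop, ENat.toENNReal_top, top_le_iff] at hz
    exact hctop hz
  have hfin0 : ({g ∈ G | g z ≠ 0}).Finite := Set.encard_ne_top_iff.mp hne
  have hpre : {g : ↥G | (g : X → ℝ≥0∞) z ≠ 0} =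
      Subtype.val ⁻¹' {g ∈ G | g z ≠ 0} := by
    ext g; simp [g.2]
  have hfin : ({g : ↥G | (g : X → ℝ≥0∞) z ≠ 0}).Finite := by
    rw [hpre]
    exact hfin0.preimage (Set.injOn_of_injective Subtype.val_injective)
  refine ⟨hfin.toFinset, ?_, ?_⟩
  · intro g hg
    by_contra hne'
    exact hg (hfin.mem_toFinset.mpr hne')
  · have h1 : ({g : ↥G | (g : X → ℝ≥0∞) z ≠ 0}).encard = (hfin.toFinset.card : ℕ∞) :=
      hfin.encard_eq_coe_toFinset_card
    have h2 : ({g : ↥G | (g : X → ℝ≥0∞) z ≠ 0}).encard = ({g ∈ G | g z ≠ 0}).encard := by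
      rw [hpre]
      exact Set.encard_preimage_of_injective_subset_range Subtype.val_injective
        (by rw [Subtype.range_coe]; exact fun x hx => hx.1)
    calc ((hfin.toFinset.card : ℕ) : ℝ≥0∞) = (((hfin.toFinset.card : ℕ∞)) : ℝ≥0∞) := by
          rw [ENat.toENNReal_coe]
      _ = (({g ∈ G | g z ≠ 0}).encard : ℝ≥0∞) := by rw [← h1, h2]
      _ ≤ c := hz

/-- `miniremark:lpnorms`: an `ℓ^q`-type estimate for the `L^p` norm of a sum of
nonnegative functions with bounded overlap `γ`. -/
theorem stmt12 {X : Type*} [MeasurableSpace X] (φ : Measure X) (p q : ℝ≥0∞)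
    (hq1 : 1 ≤ q) (hqp : q ≤ p)
    (G : Set (X → ℝ≥0∞)) (hGc : G.Countable) (hGm : ∀ g ∈ G, Measurable g)
    (γ : ℝ) (hγ : 1 ≤ γ)
    (hcard : ∀ᵐ z ∂φ, ({g ∈ G | g z ≠ 0}).encard ≤ ENNReal.ofReal γ)
    (f : X → ℝ≥0∞) (hf : ∀ᵐ z ∂φ, f z = ∑' g : G, (g : X → ℝ≥0∞) z) :
    (q ≠ ∞ → lpNormE φ p f ≤
      ENNReal.ofReal γ * (∑' g : G, lpNormE φ p (g : X → ℝ≥0∞) ^ q.toReal) ^ (1 / q.toReal)) ∧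
    (q = ∞ → lpNormE φ p f ≤
      ENNReal.ofReal γ * ⨆ g : G, lpNormE φ p (g : X → ℝ≥0∞)) := by
  have hc1 : (1 : ℝ≥0∞) ≤ ENNReal.ofReal γ := by
    rw [← ENNReal.ofReal_one]; exact ENNReal.ofReal_le_ofReal hγ
  have hctop : ENNReal.ofReal γ ≠ ⊤ := ENNReal.ofReal_ne_top
  have : Countable ↥G := hGc.to_subtype
  set c := ENNReal.ofReal γ with hc
  have hmeas : ∀ g : ↥G, Measurable (g : X → ℝ≥0∞) := fun g => hGm g g.2
  have hb : ∀ᵐ z ∂φ, ∀ g : ↥G, (g : X → ℝ≥0∞) z ≤ essSup (g : X → ℝ≥0∞) φ :=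
    ae_all_iff.mpr fun g => ENNReal.ae_le_essSup _
  constructor
  · intro hq_top
    have hqr1 : 1 ≤ q.toReal := by
      rw [← ENNReal.toReal_one]
      exact ENNReal.toReal_mono hq_top hq1
    set qr := q.toReal with hqr
    have hqr0 : 0 < qr := lt_of_lt_of_le one_pos hqr1
    have he0 : 0 ≤ 1 - 1 / qr := by
      have h : 1 / qr ≤ 1 := by rw [div_le_one hqr0]; exact hqr1
      linarith
    have he1 : 1 - 1 / qr ≤ 1 := by
      have := one_div_pos.mpr hqr0; linarith
    have hpt : ∀ᵐ z ∂φ,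
        f z ≤ c ^ (1 - 1 / qr) * (∑' g : ↥G, (g : X → ℝ≥0∞) z ^ qr) ^ (1 / qr) := by
      filter_upwards [hcard, hf] with z hz hfz
      obtain ⟨s, hs0, hscard⟩ := support_finset_aux G z hctop hz
      rw [hfz, tsum_eq_sum hs0]
      calc ∑ g ∈ s, (g : X → ℝ≥0∞) z
          ≤ (s.card : ℝ≥0∞) ^ (1 - 1 / qr) * (∑ g ∈ s, (g : X → ℝ≥0∞) z ^ qr) ^ (1 / qr) :=
            finset_holder_aux s _ hqr1
        _ ≤ c ^ (1 - 1 / qr) * (∑' g : ↥G, (g : X → ℝ≥0∞) z ^ qr) ^ (1 / qr) :=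
            mul_le_mul' (ENNReal.rpow_le_rpow hscard he0)
              (ENNReal.rpow_le_rpow (ENNReal.sum_le_tsum s) (by positivity))
    have hce : c ^ (1 - 1 / qr) ≤ c := by
      calc c ^ (1 - 1 / qr) ≤ c ^ (1 : ℝ) := ENNReal.rpow_le_rpow_of_exponent_le hc1 he1
        _ = c := ENNReal.rpow_one c
    by_cases hp : p = ∞
    · subst hp
      simp only [lpNormE, reduceIte]
      refine essSup_le_of_ae_le _ ?_
      filter_upwards [hpt, hb] with z h1 h2
      refine h1.trans ?_
      exact mul_le_mul' hce (ENNReal.rpow_le_rpow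
        (ENNReal.tsum_le_tsum fun g => ENNReal.rpow_le_rpow (h2 g) hqr0.le) (by positivity))
    · have hpr1 : 1 ≤ p.toReal := by
        rw [← ENNReal.toReal_one]; exact ENNReal.toReal_mono hp (hq1.trans hqp)
      set pr := p.toReal with hpr
      have hpr0 : 0 < pr := lt_of_lt_of_le one_pos hpr1
      have hqrpr : qr ≤ pr := ENNReal.toReal_mono hp hqp
      set r : ℝ := pr / qr with hr
      have hr1 : 1 ≤ r := by rw [hr, le_div_iff₀ hqr0]; linarith
      have hr0 : 0 < r := lt_of_lt_of_le one_pos hr1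
      set T : X → ℝ≥0∞ := fun z => ∑' g : ↥G, (g : X → ℝ≥0∞) z ^ qr with hT
      have hmulqr : 1 / qr * pr = r := by rw [hr]; ring
      have hqrr : qr * r = pr := by rw [hr]; field_simp
      have e_rq : 1 / r * (1 / qr) = 1 / pr := by rw [hr]; field_simp
      have e2 : 1 / pr * qr = 1 / r := by rw [hr, one_div_div]; ring
      simp only [lpNormE, hp, if_false]
      have step1 : ∫⁻ z, f z ^ pr ∂φ ≤ (c ^ (1 - 1 / qr)) ^ pr * ∫⁻ z, T z ^ r ∂φ := by
        have hbb : ∀ᵐ z ∂φ, f z ^ pr ≤ (c ^ (1 - 1 / qr)) ^ pr * T z ^ r := by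
          filter_upwards [hpt] with z h1
          calc f z ^ pr ≤ (c ^ (1 - 1 / qr) * T z ^ (1 / qr)) ^ pr :=
                ENNReal.rpow_le_rpow h1 hpr0.le
            _ = (c ^ (1 - 1 / qr)) ^ pr * T z ^ r := by
                rw [ENNReal.mul_rpow_of_nonneg _ _ hpr0.le]
                congr 1
                rw [← ENNReal.rpow_mul, hmulqr]
        calc ∫⁻ z, f z ^ pr ∂φ ≤ ∫⁻ z, (c ^ (1 - 1 / qr)) ^ pr * T z ^ r ∂φ :=
              lintegral_mono_ae hbb
          _ = (c ^ (1 - 1 / qr)) ^ pr * ∫⁻ z, T z ^ r ∂φ :=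
              lintegral_const_mul' _ _ (ENNReal.rpow_ne_top_of_nonneg hpr0.le
                (ENNReal.rpow_ne_top_of_nonneg he0 hctop))
      have step2 : (∫⁻ z, T z ^ r ∂φ) ^ (1 / r) ≤
          ∑' g : ↥G, (∫⁻ z, (g : X → ℝ≥0∞) z ^ pr ∂φ) ^ (1 / r) := by
        have hpow : ∀ x : ℝ≥0∞, (x ^ qr) ^ r = x ^ pr := fun x => by
          rw [← ENNReal.rpow_mul, hqrr]
        have h := tsum_minkowski_aux φ (fun (g : ↥G) z => (g : X → ℝ≥0∞) z ^ qr)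
          (fun g => (hmeas g).pow_const qr) hr1
        simp_rw [hpow] at h
        exact h
      calc (∫⁻ x, f x ^ pr ∂φ) ^ (1 / pr)
          ≤ ((c ^ (1 - 1 / qr)) ^ pr * ∫⁻ z, T z ^ r ∂φ) ^ (1 / pr) :=
            ENNReal.rpow_le_rpow step1 (by positivity)
        _ = c ^ (1 - 1 / qr) * (∫⁻ z, T z ^ r ∂φ) ^ (1 / pr) := by
            rw [ENNReal.mul_rpow_of_nonneg _ _ (by positivity), ← ENNReal.rpow_mul,
              mul_one_div_cancel hpr0.ne', ENNReal.rpow_one]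
        _ = c ^ (1 - 1 / qr) * ((∫⁻ z, T z ^ r ∂φ) ^ (1 / r)) ^ (1 / qr) := by
            rw [← ENNReal.rpow_mul, e_rq]
        _ ≤ c ^ (1 - 1 / qr) * (∑' g : ↥G, (∫⁻ z, (g : X → ℝ≥0∞) z ^ pr ∂φ) ^ (1 / r)) ^ (1 / qr) :=
            mul_le_mul' le_rfl (ENNReal.rpow_le_rpow step2 (by positivity))
        _ = c ^ (1 - 1 / qr) *
            (∑' g : ↥G, ((∫⁻ x, (g : X → ℝ≥0∞) x ^ pr ∂φ) ^ (1 / pr)) ^ qr) ^ (1 / qr) := by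
            have hpow2 : ∀ B : ℝ≥0∞, B ^ (1 / r) = (B ^ (1 / pr)) ^ qr := fun B => by
              rw [← ENNReal.rpow_mul, e2]
            simp_rw [hpow2]
        _ ≤ c * (∑' g : ↥G, ((∫⁻ x, (g : X → ℝ≥0∞) x ^ pr ∂φ) ^ (1 / pr)) ^ qr) ^ (1 / qr) :=
            mul_le_mul' hce le_rfl
  · intro hq_top
    subst hq_top
    have hp : p = ∞ := top_le_iff.mp hqp
    subst hp
    simp only [lpNormE, reduceIte]
    refine essSup_le_of_ae_le _ ?_
    filter_upwards [hcard, hf, hb] with z hz hfz h2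
    obtain ⟨s, hs0, hscard⟩ := support_finset_aux G z hctop hz
    rw [hfz, tsum_eq_sum hs0]
    set M := ⨆ g : ↥G, essSup (g : X → ℝ≥0∞) φ with hM
    calc ∑ g ∈ s, (g : X → ℝ≥0∞) z
        ≤ s.card • M := Finset.sum_le_card_nsmul s _ M
          (fun g _ => (h2 g).trans (le_iSup (fun g : ↥G => essSup (g : X → ℝ≥0∞) φ) g))
      _ = (s.card : ℝ≥0∞) * M := nsmul_eq_mul _ _
      _ ≤ c * M := mul_le_mul' hscard le_rfl
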